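/- Let n ≥ 4 and let A, B ∈ 𝔽^{n×n} be such that A satisfies property R and A ≡PME≤4 B. Let i₁, i₂, i₃, i₄ ∈ [n] be four distinct indices with D₁(A,B) = {i₁, i₂} and D₂(A,B) = {i₃, i₄}. Then there exists X ⊆ [n] with i₁, i₂ ∈ X and i₃, i₄ ∈ X̄ such that X is a cut of A. -/

import Mathlib

namespace PMAP

open Matrix

variable {K : Type*}

/-- The submatrix of a square matrix `A` with rows indexed by `S` and columns indexed by `T`. -/
def subm {m : Type*} (A : Matrix m m K) (S T : Finset m) : Matrix S T K :=
  Matrix.of fun i j => A i.1 j.1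

/-- The principal minor of `A` indexed by `S`. -/
noncomputable def pminor {m : Type*} [DecidableEq m] [CommRing K]
    (A : Matrix m m K) (S : Finset m) : K :=
  (subm A S S).det

/-- `A` and `B` are principal minor equivalent. -/
def PME {m : Type*} [DecidableEq m] [CommRing K] (A B : Matrix m m K) : Prop :=
  ∀ S : Finset m, S.Nonempty → pminor A S = pminor B S

/-- `A` and `B` are principal minor equivalent up to order `k`. -/
def PMEupto {m : Type*} [DecidableEq m] [CommRing K] (k : ℕ) (A B : Matrix m m K) : Prop :=
  ∀ S : Finset m, S.Nonempty → S.card ≤ k → pminor A S = pminor B S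

/-- `X` is a cut of the principal submatrix `A[I]`. -/
def IsCutOn {m : Type*} [DecidableEq m] [Field K] (A : Matrix m m K) (I X : Finset m) : Prop :=
  X ⊆ I ∧ 2 ≤ X.card ∧ X.card + 2 ≤ I.card ∧
    (subm A X (I \ X)).rank ≤ 1 ∧ (subm A (I \ X) X).rank ≤ 1

/-- `X` is a cut of `A`. -/
def IsCut {m : Type*} [Fintype m] [DecidableEq m] [Field K] (A : Matrix m m K)
    (X : Finset m) : Prop :=
  IsCutOn A Finset.univ X

/-- Property `R`: all off-diagonal entries are nonzero, and every rank-one `2×2`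
submatrix `A[{i,j},{k,ℓ}]` (with `i,j,k,ℓ` distinct) extends to a rank-one submatrix
`A[X, Xᶜ]` with `i,j ∈ X` and `k,ℓ ∈ Xᶜ`. -/
def PropR {m : Type*} [Fintype m] [DecidableEq m] [Field K] (A : Matrix m m K) : Prop :=
  (∀ i j : m, i ≠ j → A i j ≠ 0) ∧
    ∀ i j k l : m, i ≠ j → i ≠ k → i ≠ l → j ≠ k → j ≠ l → k ≠ l →
      (subm A {i, j} {k, l}).rank = 1 →
      ∃ X : Finset m, i ∈ X ∧ j ∈ X ∧ k ∉ X ∧ l ∉ X ∧ (subm A X Xᶜ).rank = 1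

/-- `A` is diagonally similar to `B`: `B = D⁻¹ A D` for an invertible diagonal matrix `D`. -/
def DiagSim {m : Type*} [Field K] (A B : Matrix m m K) : Prop :=
  ∃ D : m → K, (∀ i, D i ≠ 0) ∧ ∀ i j, B i j = (D i)⁻¹ * A i j * D j

/-- The set `D₁(A,B)` of indices `i` with `A[[n]∖{i}]` diagonally similar to `B[[n]∖{i}]`. -/
def D1 {n : ℕ} [Field K] (A B : Matrix (Fin n) (Fin n) K) : Set (Fin n) :=
  {i | DiagSim (subm A {i}ᶜ {i}ᶜ) (subm B {i}ᶜ {i}ᶜ)}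

/-- The set `D₂(A,B)` of indices `i` with `A[[n]∖{i}]` diagonally similar to `B[[n]∖{i}]ᵀ`. -/
def D2 {n : ℕ} [Field K] (A B : Matrix (Fin n) (Fin n) K) : Set (Fin n) :=
  {i | DiagSim (subm A {i}ᶜ {i}ᶜ) (subm B {i}ᶜ {i}ᶜ)ᵀ}

/-- The pair `{{i,j},{k,l}}` satisfies property `P` for `A`: there is a matrix `C`
principal minor equivalent to `A[{i,j,k,l}]` in which `{i,j}` is a cut. -/
def PropP {n : ℕ} [Field K] (A : Matrix (Fin n) (Fin n) K) (i j k l : Fin n) : Prop :=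
  ∃ C : Matrix (Fin n) (Fin n) K,
    (∀ S : Finset (Fin n), S.Nonempty → S ⊆ {i, j, k, l} → pminor C S = pminor A S) ∧
    IsCutOn C {i, j, k, l} {i, j}

/-- `A` is irreducible: it cannot be brought to block upper triangular form
by a simultaneous permutation of rows and columns. -/
def Irred {m : Type*} [Fintype m] [Zero K] (A : Matrix m m K) : Prop :=
  ∀ S : Finset m, S.Nonempty → S ≠ Finset.univ → ∃ i, i ∉ S ∧ ∃ j ∈ S, A i j ≠ 0



section Helpers

variable {K : Type*} [Field K] {n : ℕ}

lemma det_fin_four (N : Matrix (Fin 4) (Fin 4) K) :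
    N.det = N 0 0*N 1 1*N 2 2*N 3 3 - N 0 0*N 1 1*N 2 3*N 3 2 - N 0 0*N 1 2*N 2 1*N 3 3 + N 0 0*N 1 2*N 2 3*N 3 1 + N 0 0*N 1 3*N 2 1*N 3 2 - N 0 0*N 1 3*N 2 2*N 3 1 - N 0 1*N 1 0*N 2 2*N 3 3 + N 0 1*N 1 0*N 2 3*N 3 2 + N 0 1*N 1 2*N 2 0*N 3 3 - N 0 1*N 1 2*N 2 3*N 3 0 - N 0 1*N 1 3*N 2 0*N 3 2 + N 0 1*N 1 3*N 2 2*N 3 0 + N 0 2*N 1 0*N 2 1*N 3 3 - N 0 2*N 1 0*N 2 3*N 3 1 - N 0 2*N 1 1*N 2 0*N 3 3 + N 0 2*N 1 1*N 2 3*N 3 0 + N 0 2*N 1 3*N 2 0*N 3 1 - N 0 2*N 1 3*N 2 1*N 3 0 - N 0 3*N 1 0*N 2 1*N 3 2 + N 0 3*N 1 0*N 2 2*N 3 1 + N 0 3*N 1 1*N 2 0*N 3 2 - N 0 3*N 1 1*N 2 2*N 3 0 - N 0 3*N 1 2*N 2 0*N 3 1 + N 0 3*N 1 2*N 2 1*N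 3 0 := by
  rw [Matrix.det_succ_row_zero]
  simp [Fin.sum_univ_succ, Matrix.det_fin_three,
    show (Fin.succ 2 : Fin 4) = 3 from rfl,
    show (Fin.castSucc 2 : Fin 4) = 2 from rfl,
    show (Fin.succAbove 2 2 : Fin 4) = 3 from rfl,
    show (Fin.succAbove 1 2 : Fin 4) = 3 from rfl,
    show (Fin.succAbove 3 2 : Fin 4) = 2 from rfl]
  ring


lemma pminor_image {k : ℕ} (M : Matrix (Fin n) (Fin n) K) (v : Fin k → Fin n)
    (hv : Function.Injective v) :
    pminor M (Finset.image v Finset.univ) =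
      (Matrix.of fun i j : Fin k => M (v i) (v j)).det := by
  classical
  let e : Fin k ≃ {x // x ∈ Finset.image v Finset.univ} :=
    Equiv.ofBijective (fun i => ⟨v i, Finset.mem_image_of_mem v (Finset.mem_univ i)⟩)
      ⟨fun i j h => hv (congrArg Subtype.val h), by
        rintro ⟨x, hx⟩
        obtain ⟨i, -, rfl⟩ := Finset.mem_image.mp hx
        exact ⟨i, rfl⟩⟩
  rw [pminor, ← Matrix.det_submatrix_equiv_self e]
  rfl

lemma image_two (a b : Fin n) :
    Finset.image ![a, b] Finset.univ = {a, b} := by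
  have h : (Finset.univ : Finset (Fin 2)) = {0, 1} := by decide
  rw [h]
  simp

lemma image_four (a b c d : Fin n) :
    Finset.image ![a, b, c, d] Finset.univ = {a, b, c, d} := by
  have h : (Finset.univ : Finset (Fin 4)) = {0, 1, 2, 3} := by decide
  rw [h]
  simp [show ((2 : Fin 4)) = (2 : Fin 4) from rfl]

lemma pminor_two (M : Matrix (Fin n) (Fin n) K) (a b : Fin n) (hab : a ≠ b) :
    pminor M {a, b} = M a a * M b b - M a b * M b a := by
  have hinj : Function.Injective ![a, b] := by
    intro i j hij
    fin_cases i <;> fin_cases j <;> simp_all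
  rw [← image_two a b, pminor_image M _ hinj, Matrix.det_fin_two]
  simp

lemma pminor_four (M : Matrix (Fin n) (Fin n) K) (a b c d : Fin n)
    (hab : a ≠ b) (hac : a ≠ c) (had : a ≠ d) (hbc : b ≠ c) (hbd : b ≠ d) (hcd : c ≠ d) :
    pminor M {a, b, c, d} = M a a*M b b*M c c*M d d - M a a*M b b*M c d*M d c - M a a*M b c*M c b*M d d + M a a*M b c*M c d*M d b + M a a*M b d*M c b*M d c - M a a*M b d*M c c*M d b - M a b*M b a*M c c*M d d + M a b*M b a*M c d*M d c + M a b*M b c*M c a*M d d - M a b*M b c*M c d*M d a - M a b*M b d*M c a*M d c + M a b*M b d*M c c*M d a + M a c*M b a*M c b*M d d - M a c*M b a*M c d*M d b - M a c*M b b*M c a*M d d + M a c*M b b*M c d*M d a + M a c*M b d*M c a*M d b - M a c*M b d*M c b*M d a - M a d*M b a*M c b*M d c + M a d*M b a*M c c*M d b + M a d*M b b*M c a*M d c - M a d*M b b*M c c*M d a - M a d*M b c*M c a*M d b + M a d*M b c*M c b*M d a := by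
  have hinj : Function.Injective ![a, b, c, d] := by
    intro i j hij
    fin_cases i <;> fin_cases j <;> simp_all
  rw [← image_four a b c d, pminor_image M _ hinj, det_fin_four]
  simp [show (Fin.succ 1 : Fin 4) = 2 from rfl]

lemma pminor_conj (M B : Matrix (Fin n) (Fin n) K) (d : Fin n → K) (hd : ∀ p, d p ≠ 0)
    (h : ∀ p q, B p q = (d p)⁻¹ * M p q * d q) (S : Finset (Fin n)) :
    pminor B S = pminor M S := by
  classical
  have hmat : subm B S S =
      Matrix.diagonal (fun p : {x // x ∈ S} => (d p.1)⁻¹) *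
        (subm M S S * Matrix.diagonal (fun p : {x // x ∈ S} => d p.1)) := by
    ext p q
    simp [subm, Matrix.mul_diagonal, Matrix.diagonal_mul, h p.1 q.1]
    ring
  have hne : (∏ p : {x // x ∈ S}, d p.1) ≠ 0 :=
    Finset.prod_ne_zero_iff.mpr fun p _ => hd p.1
  rw [pminor, pminor, hmat, Matrix.det_mul, Matrix.det_mul, Matrix.det_diagonal,
    Matrix.det_diagonal, Finset.prod_inv_distrib]
  field_simp

lemma pminor_transpose (M : Matrix (Fin n) (Fin n) K) (S : Finset (Fin n)) :
    pminor Mᵀ S = pminor M S := by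
  rw [pminor, pminor, ← Matrix.det_transpose (subm M S S)]
  rfl

lemma rank_ne_zero_of_entry {m o : Type*} [Fintype m] [Fintype o] [DecidableEq o]
    (M : Matrix m o K) (p : m) (q : o) (h : M p q ≠ 0) : M.rank ≠ 0 := by
  intro h0
  rw [Matrix.rank] at h0
  have hbot : LinearMap.range M.mulVecLin = ⊥ := Submodule.finrank_eq_zero.mp h0
  have hz : M.mulVecLin (Pi.single q 1) = 0 := by
    have hmem : M.mulVecLin (Pi.single q 1) ∈ LinearMap.range M.mulVecLin := ⟨_, rfl⟩
    rw [hbot] at hmem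
    simpa using hmem
  have := congrFun hz p
  simp [Matrix.mulVecLin_apply] at this
  exact h this

end Helpers


lemma glue_diag {K : Type*} [Field K] {n : ℕ} (F G : Fin n → Fin n → K)
    (hG : ∀ p q, p ≠ q → G p q ≠ 0)
    (i j r : Fin n) (hij : i ≠ j) (hri : r ≠ i) (hrj : r ≠ j)
    (d1 d2 : Fin n → K) (h1ne : ∀ p, d1 p ≠ 0) (h2ne : ∀ p, d2 p ≠ 0)
    (h1 : ∀ p q, p ≠ i → q ≠ i → F p q = (d1 p)⁻¹ * G p q * d1 q)
    (h2 : ∀ p q, p ≠ j → q ≠ j → F p q = (d2 p)⁻¹ * G p q * d2 q) :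
    ∃ d : Fin n → K, (∀ p, d p ≠ 0) ∧
      ∀ p q, ¬(p = i ∧ q = j) → ¬(p = j ∧ q = i) →
        F p q = (d p)⁻¹ * G p q * d q := by
  have hcne : d2 r / d1 r ≠ 0 := div_ne_zero (h2ne r) (h1ne r)
  have hc : ∀ p, p ≠ i → p ≠ j → d2 p = d2 r / d1 r * d1 p := by
    intro p hpi hpj
    by_cases hpr : p = r
    · subst hpr; exact (div_mul_cancel₀ _ (h1ne p)).symm
    · have e1 := h1 p r hpi hri
      have e2 := h2 p r hpj hrj
      have e1' : F p r * d1 p = G p r * d1 r := by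
        rw [e1]; field_simp [h1ne p]
      have e2' : F p r * d2 p = G p r * d2 r := by
        rw [e2]; field_simp [h2ne p]
      have h3 : G p r * (d1 r * d2 p) = G p r * (d2 r * d1 p) := by
        linear_combination d1 p * e2' - d2 p * e1'
      have h4 := mul_left_cancel₀ (hG p r hpr) h3
      rw [div_mul_eq_mul_div, eq_div_iff (h1ne r)]
      linear_combination h4
  refine ⟨fun p => if p = i then d2 i / (d2 r / d1 r) else d1 p, fun p => ?_, fun p q hpq hqp => ?_⟩
  · by_cases h : p = i <;> simp [h, div_ne_zero (h2ne i) hcne, h1ne p]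
  · dsimp only
    by_cases hp : p = i
    · by_cases hq : q = i
      · rw [if_pos hp, if_pos hq, hp, hq, h2 i i hij hij]
        field_simp [h1ne r, h2ne r, h2ne i]
      · have hqj : q ≠ j := fun hj => hpq ⟨hp, hj⟩
        rw [if_pos hp, if_neg hq, hp, h2 i q hij hqj, hc q hq hqj]
        field_simp
    · by_cases hq : q = i
      · have hpj : p ≠ j := fun hj => hqp ⟨hj, hq⟩
        rw [if_neg hp, if_pos hq, hq, h2 p i hpj hij, hc p hp hpj]
        field_simp
      · rw [if_neg hp, if_neg hq]
        exact h1 p q hp hq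


/-- If `A` satisfies property `R`, `A ≡PME≤4 B`,
`D₁(A,B) = {i₁,i₂}` and `D₂(A,B) = {i₃,i₄}`, then `A` has a cut separating
`{i₁,i₂}` from `{i₃,i₄}`. -/
theorem cut_of_d1_pair_d2_pair {n : ℕ} (hn : 4 ≤ n) {K : Type*} [Field K]
    (A B : Matrix (Fin n) (Fin n) K) (hA : PropR A) (h4 : PMEupto 4 A B)
    (i₁ i₂ i₃ i₄ : Fin n)
    (h12 : i₁ ≠ i₂) (h13 : i₁ ≠ i₃) (h14 : i₁ ≠ i₄)
    (h23 : i₂ ≠ i₃) (h24 : i₂ ≠ i₄) (h34 : i₃ ≠ i₄)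
    (hD1 : D1 A B = {i₁, i₂}) (hD2 : D2 A B = {i₃, i₄}) :
    ∃ X : Finset (Fin n), i₁ ∈ X ∧ i₂ ∈ X ∧ i₃ ∉ X ∧ i₄ ∉ X ∧ IsCut A X := by
  classical
  obtain ⟨hoff, hPropR⟩ := hA
  -- diagonal similarity data from the four memberships
  have hm1 : DiagSim (subm A ({i₁}ᶜ) ({i₁}ᶜ)) (subm B ({i₁}ᶜ) ({i₁}ᶜ)) := by
    have h : i₁ ∈ D1 A B := by rw [hD1]; exact Set.mem_insert _ _
    exact h
  have hm2 : DiagSim (subm A ({i₂}ᶜ) ({i₂}ᶜ)) (subm B ({i₂}ᶜ) ({i₂}ᶜ)) := by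
    have h : i₂ ∈ D1 A B := by rw [hD1]; exact Set.mem_insert_iff.mpr (Or.inr rfl)
    exact h
  have hm3 : DiagSim (subm A ({i₃}ᶜ) ({i₃}ᶜ)) (subm B ({i₃}ᶜ) ({i₃}ᶜ))ᵀ := by
    have h : i₃ ∈ D2 A B := by rw [hD2]; exact Set.mem_insert _ _
    exact h
  have hm4 : DiagSim (subm A ({i₄}ᶜ) ({i₄}ᶜ)) (subm B ({i₄}ᶜ) ({i₄}ᶜ))ᵀ := by
    have h : i₄ ∈ D2 A B := by rw [hD2]; exact Set.mem_insert_iff.mpr (Or.inr rfl)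
    exact h
  have ext1 : ∃ dd : Fin n → K, (∀ p, dd p ≠ 0) ∧
      ∀ p q : Fin n, p ≠ i₁ → q ≠ i₁ → B p q = (dd p)⁻¹ * A p q * dd q := by
    obtain ⟨D, hD0, hDe⟩ := hm1
    refine ⟨fun p => if h : p = i₁ then 1 else D ⟨p, by simp [h]⟩, fun p => ?_, fun p q hp hq => ?_⟩
    · by_cases h : p = i₁ <;> simp [h, hD0]
    · have h := hDe ⟨p, by simp [hp]⟩ ⟨q, by simp [hq]⟩
      simp only [subm, Matrix.of_apply] at h
      simp only [dif_neg hp, dif_neg hq]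
      exact h
  have ext2 : ∃ dd : Fin n → K, (∀ p, dd p ≠ 0) ∧
      ∀ p q : Fin n, p ≠ i₂ → q ≠ i₂ → B p q = (dd p)⁻¹ * A p q * dd q := by
    obtain ⟨D, hD0, hDe⟩ := hm2
    refine ⟨fun p => if h : p = i₂ then 1 else D ⟨p, by simp [h]⟩, fun p => ?_, fun p q hp hq => ?_⟩
    · by_cases h : p = i₂ <;> simp [h, hD0]
    · have h := hDe ⟨p, by simp [hp]⟩ ⟨q, by simp [hq]⟩
      simp only [subm, Matrix.of_apply] at h
      simp only [dif_neg hp, dif_neg hq]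
      exact h
  have ext3 : ∃ dd : Fin n → K, (∀ p, dd p ≠ 0) ∧
      ∀ p q : Fin n, p ≠ i₃ → q ≠ i₃ → B q p = (dd p)⁻¹ * A p q * dd q := by
    obtain ⟨D, hD0, hDe⟩ := hm3
    refine ⟨fun p => if h : p = i₃ then 1 else D ⟨p, by simp [h]⟩, fun p => ?_, fun p q hp hq => ?_⟩
    · by_cases h : p = i₃ <;> simp [h, hD0]
    · have h := hDe ⟨p, by simp [hp]⟩ ⟨q, by simp [hq]⟩
      simp only [subm, Matrix.transpose_apply, Matrix.of_apply] at h
      simp only [dif_neg hp, dif_neg hq]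
      exact h
  have ext4 : ∃ dd : Fin n → K, (∀ p, dd p ≠ 0) ∧
      ∀ p q : Fin n, p ≠ i₄ → q ≠ i₄ → B q p = (dd p)⁻¹ * A p q * dd q := by
    obtain ⟨D, hD0, hDe⟩ := hm4
    refine ⟨fun p => if h : p = i₄ then 1 else D ⟨p, by simp [h]⟩, fun p => ?_, fun p q hp hq => ?_⟩
    · by_cases h : p = i₄ <;> simp [h, hD0]
    · have h := hDe ⟨p, by simp [hp]⟩ ⟨q, by simp [hq]⟩
      simp only [subm, Matrix.transpose_apply, Matrix.of_apply] at h
      simp only [dif_neg hp, dif_neg hq]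
      exact h
  obtain ⟨d1, hd1ne, hd1⟩ := ext1
  obtain ⟨d2, hd2ne, hd2⟩ := ext2
  obtain ⟨e3, he3ne, he3⟩ := ext3
  obtain ⟨e4, he4ne, he4⟩ := ext4
  obtain ⟨d, hdne, hd⟩ :=
    glue_diag B A hoff i₁ i₂ i₃ h12 (Ne.symm h13) (Ne.symm h23) d1 d2 hd1ne hd2ne hd1 hd2
  obtain ⟨e, hene, heraw⟩ :=
    glue_diag (fun p q => B q p) A hoff i₃ i₄ i₁ h34 h13 h14 e3 e4 he3ne he4ne he3 he4
  have he : ∀ p q : Fin n, ¬(p = i₃ ∧ q = i₄) → ¬(p = i₄ ∧ q = i₃) →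
      B q p = (e p)⁻¹ * A p q * e q := fun p q c1 c2 => heraw p q c1 c2
  have hd' : ∀ p q : Fin n, ¬(p = i₁ ∧ q = i₂) → ¬(p = i₂ ∧ q = i₁) →
      d p * B p q = A p q * d q := by
    intro p q c1 c2
    rw [hd p q c1 c2]
    field_simp
    rw [mul_assoc]
    exact mul_div_cancel_left₀ _ (hdne p)
  have he' : ∀ p q : Fin n, ¬(p = i₃ ∧ q = i₄) → ¬(p = i₄ ∧ q = i₃) →
      e p * B q p = A p q * e q := by
    intro p q c1 c2
    rw [he p q c1 c2]
    field_simp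
    rw [mul_assoc]
    exact mul_div_cancel_left₀ _ (hene p)
  -- the exceptional scalars
  obtain ⟨x, hx'⟩ : ∃ x : K, d i₁ * B i₁ i₂ = x * A i₁ i₂ * d i₂ :=
    ⟨d i₁ * B i₁ i₂ / (A i₁ i₂ * d i₂), by rw [div_mul_eq_mul_div, div_mul_eq_mul_div, eq_div_iff (mul_ne_zero (hoff i₁ i₂ h12) (hdne i₂))]; ring⟩
  obtain ⟨y, hy'⟩ : ∃ y : K, d i₂ * B i₂ i₁ = y * A i₂ i₁ * d i₁ :=
    ⟨d i₂ * B i₂ i₁ / (A i₂ i₁ * d i₁), by rw [div_mul_eq_mul_div, div_mul_eq_mul_div, eq_div_iff (mul_ne_zero (hoff i₂ i₁ (Ne.symm h12)) (hdne i₁))]; ring⟩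
  obtain ⟨u, hu'⟩ : ∃ u : K, e i₃ * B i₄ i₃ = u * A i₃ i₄ * e i₄ :=
    ⟨e i₃ * B i₄ i₃ / (A i₃ i₄ * e i₄), by rw [div_mul_eq_mul_div, div_mul_eq_mul_div, eq_div_iff (mul_ne_zero (hoff i₃ i₄ h34) (hene i₄))]; ring⟩
  obtain ⟨w, hw'⟩ : ∃ w : K, e i₄ * B i₃ i₄ = w * A i₄ i₃ * e i₃ :=
    ⟨e i₄ * B i₃ i₄ / (A i₄ i₃ * e i₃), by rw [div_mul_eq_mul_div, div_mul_eq_mul_div, eq_div_iff (mul_ne_zero (hoff i₄ i₃ (Ne.symm h34)) (hene i₃))]; ring⟩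
  -- modified matrices
  obtain ⟨A', hA'BA, hA'12, hA'21, hA'o⟩ :
      ∃ C : Matrix (Fin n) (Fin n) K,
        (∀ s t, B s t = (d s)⁻¹ * C s t * d t) ∧ C i₁ i₂ = x * A i₁ i₂ ∧
        C i₂ i₁ = y * A i₂ i₁ ∧
        (∀ s t, ¬(s = i₁ ∧ t = i₂) → ¬(s = i₂ ∧ t = i₁) → C s t = A s t) := by
    refine ⟨Matrix.of fun s t =>
      if s = i₁ ∧ t = i₂ then x * A s t else if s = i₂ ∧ t = i₁ then y * A s t else A s t,
      fun s t => ?_, ?_, ?_, fun s t c1 c2 => ?_⟩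
    · by_cases c1 : s = i₁ ∧ t = i₂
      · obtain ⟨rfl, rfl⟩ := c1
        simp only [Matrix.of_apply, if_pos (⟨rfl, rfl⟩ : s = s ∧ t = t)]
        field_simp [hdne s]
        simp only [and_self, if_true]
        linear_combination hx'
      · by_cases c2 : s = i₂ ∧ t = i₁
        · obtain ⟨rfl, rfl⟩ := c2
          simp only [Matrix.of_apply, if_neg c1, if_pos (⟨rfl, rfl⟩ : s = s ∧ t = t)]
          field_simp [hdne s]
          simp only [and_self, if_true]
          linear_combination hy'
        · simp only [Matrix.of_apply, if_neg c1, if_neg c2]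
          exact hd s t c1 c2
    · simp
    · simp [Ne.symm h12]
    · simp only [Matrix.of_apply, if_neg c1, if_neg c2]
  obtain ⟨A'', hA''BA, hA''34, hA''43, hA''o⟩ :
      ∃ C : Matrix (Fin n) (Fin n) K,
        (∀ s t, B t s = (e s)⁻¹ * C s t * e t) ∧ C i₃ i₄ = u * A i₃ i₄ ∧
        C i₄ i₃ = w * A i₄ i₃ ∧
        (∀ s t, ¬(s = i₃ ∧ t = i₄) → ¬(s = i₄ ∧ t = i₃) → C s t = A s t) := by
    refine ⟨Matrix.of fun s t =>
      if s = i₃ ∧ t = i₄ then u * A s t else if s = i₄ ∧ t = i₃ then w * A s t else A s t,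
      fun s t => ?_, ?_, ?_, fun s t c1 c2 => ?_⟩
    · by_cases c1 : s = i₃ ∧ t = i₄
      · obtain ⟨rfl, rfl⟩ := c1
        simp only [Matrix.of_apply, if_pos (⟨rfl, rfl⟩ : s = s ∧ t = t)]
        field_simp [hene s]
        simp only [and_self, if_true]
        linear_combination hu'
      · by_cases c2 : s = i₄ ∧ t = i₃
        · obtain ⟨rfl, rfl⟩ := c2
          simp only [Matrix.of_apply, if_neg c1, if_pos (⟨rfl, rfl⟩ : s = s ∧ t = t)]
          field_simp [hene s]
          simp only [and_self, if_true]
          linear_combination hw'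
        · simp only [Matrix.of_apply, if_neg c1, if_neg c2]
          exact he s t c1 c2
    · simp
    · simp [Ne.symm h34]
    · simp only [Matrix.of_apply, if_neg c1, if_neg c2]
  -- principal-minor transfer
  have hpmA' : ∀ S : Finset (Fin n), S.Nonempty → S.card ≤ 4 → pminor A' S = pminor A S :=
    fun S hS1 hS2 => ((pminor_conj A' B d hdne hA'BA S).symm).trans (h4 S hS1 hS2).symm
  have hA''BT : ∀ s t, Bᵀ s t = (e s)⁻¹ * A'' s t * e t := fun s t => hA''BA s t
  have hpmA'' : ∀ S : Finset (Fin n), S.Nonempty → S.card ≤ 4 → pminor A'' S = pminor A S :=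
    fun S hS1 hS2 => ((pminor_conj A'' Bᵀ e hene hA''BT S).symm).trans
      ((pminor_transpose B S).trans (h4 S hS1 hS2).symm)
  -- x*y = 1 and u*w = 1
  have hcard12 : ({i₁, i₂} : Finset (Fin n)).card ≤ 4 := by
    have h := Finset.card_insert_le i₁ ({i₂} : Finset (Fin n))
    have h' : ({i₂} : Finset (Fin n)).card = 1 := Finset.card_singleton _
    omega
  have hcard34 : ({i₃, i₄} : Finset (Fin n)).card ≤ 4 := by
    have h := Finset.card_insert_le i₃ ({i₄} : Finset (Fin n))
    have h' : ({i₄} : Finset (Fin n)).card = 1 := Finset.card_singleton _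
    omega
  have h2m := hpmA' {i₁, i₂} ⟨i₁, by simp⟩ hcard12
  rw [pminor_two A' i₁ i₂ h12, pminor_two A i₁ i₂ h12, hA'12, hA'21,
    hA'o i₁ i₁ (by tauto) (by tauto),
    hA'o i₂ i₂ (by tauto) (by tauto)] at h2m
  have hxy : x * y = 1 := by
    have hne : A i₁ i₂ * A i₂ i₁ ≠ 0 := mul_ne_zero (hoff _ _ h12) (hoff _ _ (Ne.symm h12))
    have h : A i₁ i₂ * A i₂ i₁ * (x * y) = A i₁ i₂ * A i₂ i₁ * 1 := by
      linear_combination -h2m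
    exact mul_left_cancel₀ hne h
  have h2m' := hpmA'' {i₃, i₄} ⟨i₃, by simp⟩ hcard34
  rw [pminor_two A'' i₃ i₄ h34, pminor_two A i₃ i₄ h34, hA''34, hA''43,
    hA''o i₃ i₃ (by tauto) (by tauto),
    hA''o i₄ i₄ (by tauto) (by tauto)] at h2m'
  have huw : u * w = 1 := by
    have hne : A i₃ i₄ * A i₄ i₃ ≠ 0 := mul_ne_zero (hoff _ _ h34) (hoff _ _ (Ne.symm h34))
    have h : A i₃ i₄ * A i₄ i₃ * (u * w) = A i₃ i₄ * A i₄ i₃ * 1 := by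
      linear_combination -h2m'
    exact mul_left_cancel₀ hne h
  have hxne0 : x ≠ 0 := by
    intro h0
    rw [h0, zero_mul] at hxy
    exact zero_ne_one hxy
  -- x ≠ 1
  have hxne1 : x ≠ 1 := by
    intro hx1
    have hy1 : y = 1 := by rw [hx1, one_mul] at hxy; exact hxy
    have hfull : ∀ s t, B s t = (d s)⁻¹ * A s t * d t := by
      intro s t
      by_cases c1 : s = i₁ ∧ t = i₂
      · obtain ⟨rfl, rfl⟩ := c1
        rw [hA'BA s t, hA'12, hx1, one_mul]
      · by_cases c2 : s = i₂ ∧ t = i₁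
        · obtain ⟨rfl, rfl⟩ := c2
          rw [hA'BA s t, hA'21, hy1, one_mul]
        · rw [hA'BA s t, hA'o s t c1 c2]
    have hmem : i₃ ∈ D1 A B := by
      show DiagSim _ _
      refine ⟨fun p => d p.1, fun p => hdne p.1, fun p q => ?_⟩
      simp only [subm, Matrix.of_apply]
      exact hfull p.1 q.1
    rw [hD1] at hmem
    rcases Set.mem_insert_iff.mp hmem with h | h
    · exact h13 h.symm
    · exact h23 (Set.mem_singleton_iff.mp h).symm
  -- u ≠ 1
  have hune1 : u ≠ 1 := by
    intro hu1
    have hw1 : w = 1 := by rw [hu1, one_mul] at huw; exact huw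
    have hfull : ∀ s t, B t s = (e s)⁻¹ * A s t * e t := by
      intro s t
      by_cases c1 : s = i₃ ∧ t = i₄
      · obtain ⟨rfl, rfl⟩ := c1
        rw [hA''BA s t, hA''34, hu1, one_mul]
      · by_cases c2 : s = i₄ ∧ t = i₃
        · obtain ⟨rfl, rfl⟩ := c2
          rw [hA''BA s t, hA''43, hw1, one_mul]
        · rw [hA''BA s t, hA''o s t c1 c2]
    have hmem : i₁ ∈ D2 A B := by
      show DiagSim _ _
      refine ⟨fun p => e p.1, fun p => hene p.1, fun p q => ?_⟩
      simp only [subm, Matrix.transpose_apply, Matrix.of_apply]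
      exact hfull p.1 q.1
    rw [hD2] at hmem
    rcases Set.mem_insert_iff.mp hmem with h | h
    · exact h13 h
    · exact h14 (Set.mem_singleton_iff.mp h)
  -- the symmetrizing function g
  obtain ⟨g, hg⟩ : ∃ g : Fin n → K, ∀ p, g p = d p * e p := ⟨_, fun _ => rfl⟩
  have hgne : ∀ p, g p ≠ 0 := fun p => by rw [hg]; exact mul_ne_zero (hdne p) (hene p)
  have gsym : ∀ p q : Fin n, ¬(p = i₁ ∧ q = i₂) → ¬(p = i₂ ∧ q = i₁) →
      ¬(q = i₃ ∧ p = i₄) → ¬(q = i₄ ∧ p = i₃) → A p q * g q = A q p * g p := by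
    intro p q c1 c2 c3 c4
    have h1 := hd' p q c1 c2
    have h2 := he' q p c3 c4
    rw [hg, hg]
    linear_combination (-(e q)) * h1 + d p * h2
  have hR2 : A i₂ i₁ * g i₁ = x * A i₁ i₂ * g i₂ := by
    have h2 := he' i₂ i₁ (by simp [h12, h13, h14, h23, h24, h34, Ne.symm h12, Ne.symm h13, Ne.symm h14, Ne.symm h23, Ne.symm h24, Ne.symm h34]) (by simp [h12, h13, h14, h23, h24, h34, Ne.symm h12, Ne.symm h13, Ne.symm h14, Ne.symm h23, Ne.symm h24, Ne.symm h34])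
    rw [hg, hg]
    linear_combination e i₂ * hx' - d i₁ * h2
  have hR3 : A i₄ i₃ * g i₃ = u * A i₃ i₄ * g i₄ := by
    have h1 := hd' i₄ i₃ (by simp [h12, h13, h14, h23, h24, h34, Ne.symm h12, Ne.symm h13, Ne.symm h14, Ne.symm h23, Ne.symm h24, Ne.symm h34]) (by simp [h12, h13, h14, h23, h24, h34, Ne.symm h12, Ne.symm h13, Ne.symm h14, Ne.symm h23, Ne.symm h24, Ne.symm h34])
    rw [hg, hg]
    linear_combination (-(e i₃)) * h1 + d i₄ * hu'
  have hG13 : A i₃ i₁ * g i₁ = A i₁ i₃ * g i₃ :=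
    (gsym i₁ i₃ (by simp [h12, h13, h14, h23, h24, h34, Ne.symm h12, Ne.symm h13, Ne.symm h14, Ne.symm h23, Ne.symm h24, Ne.symm h34]) (by simp [h12, h13, h14, h23, h24, h34, Ne.symm h12, Ne.symm h13, Ne.symm h14, Ne.symm h23, Ne.symm h24, Ne.symm h34]) (by simp [h12, h13, h14, h23, h24, h34, Ne.symm h12, Ne.symm h13, Ne.symm h14, Ne.symm h23, Ne.symm h24, Ne.symm h34]) (by simp [h12, h13, h14, h23, h24, h34, Ne.symm h12, Ne.symm h13, Ne.symm h14, Ne.symm h23, Ne.symm h24, Ne.symm h34])).symm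
  have hG14 : A i₄ i₁ * g i₁ = A i₁ i₄ * g i₄ :=
    (gsym i₁ i₄ (by simp [h12, h13, h14, h23, h24, h34, Ne.symm h12, Ne.symm h13, Ne.symm h14, Ne.symm h23, Ne.symm h24, Ne.symm h34]) (by simp [h12, h13, h14, h23, h24, h34, Ne.symm h12, Ne.symm h13, Ne.symm h14, Ne.symm h23, Ne.symm h24, Ne.symm h34]) (by simp [h12, h13, h14, h23, h24, h34, Ne.symm h12, Ne.symm h13, Ne.symm h14, Ne.symm h23, Ne.symm h24, Ne.symm h34]) (by simp [h12, h13, h14, h23, h24, h34, Ne.symm h12, Ne.symm h13, Ne.symm h14, Ne.symm h23, Ne.symm h24, Ne.symm h34])).symm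
  have hG23 : A i₃ i₂ * g i₂ = A i₂ i₃ * g i₃ :=
    (gsym i₂ i₃ (by simp [h12, h13, h14, h23, h24, h34, Ne.symm h12, Ne.symm h13, Ne.symm h14, Ne.symm h23, Ne.symm h24, Ne.symm h34]) (by simp [h12, h13, h14, h23, h24, h34, Ne.symm h12, Ne.symm h13, Ne.symm h14, Ne.symm h23, Ne.symm h24, Ne.symm h34]) (by simp [h12, h13, h14, h23, h24, h34, Ne.symm h12, Ne.symm h13, Ne.symm h14, Ne.symm h23, Ne.symm h24, Ne.symm h34]) (by simp [h12, h13, h14, h23, h24, h34, Ne.symm h12, Ne.symm h13, Ne.symm h14, Ne.symm h23, Ne.symm h24, Ne.symm h34])).symm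
  have hG24 : A i₄ i₂ * g i₂ = A i₂ i₄ * g i₄ :=
    (gsym i₂ i₄ (by simp [h12, h13, h14, h23, h24, h34, Ne.symm h12, Ne.symm h13, Ne.symm h14, Ne.symm h23, Ne.symm h24, Ne.symm h34]) (by simp [h12, h13, h14, h23, h24, h34, Ne.symm h12, Ne.symm h13, Ne.symm h14, Ne.symm h23, Ne.symm h24, Ne.symm h34]) (by simp [h12, h13, h14, h23, h24, h34, Ne.symm h12, Ne.symm h13, Ne.symm h14, Ne.symm h23, Ne.symm h24, Ne.symm h34]) (by simp [h12, h13, h14, h23, h24, h34, Ne.symm h12, Ne.symm h13, Ne.symm h14, Ne.symm h23, Ne.symm h24, Ne.symm h34])).symm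
  -- the 4x4 principal minor relation
  have hcard4 : ({i₁, i₂, i₃, i₄} : Finset (Fin n)).card ≤ 4 := by
    have ha := Finset.card_insert_le i₁ ({i₂, i₃, i₄} : Finset (Fin n))
    have hb := Finset.card_insert_le i₂ ({i₃, i₄} : Finset (Fin n))
    have hc := Finset.card_insert_le i₃ ({i₄} : Finset (Fin n))
    have h' : ({i₄} : Finset (Fin n)).card = 1 := Finset.card_singleton _
    omega
  have h4m := hpmA' {i₁, i₂, i₃, i₄} ⟨i₁, by simp⟩ hcard4
  rw [pminor_four A' i₁ i₂ i₃ i₄ h12 h13 h14 h23 h24 h34,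
    pminor_four A i₁ i₂ i₃ i₄ h12 h13 h14 h23 h24 h34, hA'12, hA'21,
    hA'o i₁ i₁ (by simp [h12, h13, h14, h23, h24, h34, Ne.symm h12, Ne.symm h13, Ne.symm h14, Ne.symm h23, Ne.symm h24, Ne.symm h34]) (by simp [h12, h13, h14, h23, h24, h34, Ne.symm h12, Ne.symm h13, Ne.symm h14, Ne.symm h23, Ne.symm h24, Ne.symm h34]), hA'o i₁ i₃ (by simp [h12, h13, h14, h23, h24, h34, Ne.symm h12, Ne.symm h13, Ne.symm h14, Ne.symm h23, Ne.symm h24, Ne.symm h34]) (by simp [h12, h13, h14, h23, h24, h34, Ne.symm h12, Ne.symm h13, Ne.symm h14, Ne.symm h23, Ne.symm h24, Ne.symm h34]), hA'o i₁ i₄ (by simp [h12, h13, h14, h23, h24, h34, Ne.symm h12, Ne.symm h13, Ne.symm h14, Ne.symm h23, Ne.symm h24, Ne.symm h34]) (by simp [h12, h13, h14, h23, h24, h34, Ne.symm h12, Ne.symm h13, Ne.symm h14, Ne.symm h23, Ne.symm h24, Ne.symm h34]),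
    hA'o i₂ i₂ (by simp [h12, h13, h14, h23, h24, h34, Ne.symm h12, Ne.symm h13, Ne.symm h14, Ne.symm h23, Ne.symm h24, Ne.symm h34]) (by simp [h12, h13, h14, h23, h24, h34, Ne.symm h12, Ne.symm h13, Ne.symm h14, Ne.symm h23, Ne.symm h24, Ne.symm h34]), hA'o i₂ i₃ (by simp [h12, h13, h14, h23, h24, h34, Ne.symm h12, Ne.symm h13, Ne.symm h14, Ne.symm h23, Ne.symm h24, Ne.symm h34]) (by simp [h12, h13, h14, h23, h24, h34, Ne.symm h12, Ne.symm h13, Ne.symm h14, Ne.symm h23, Ne.symm h24, Ne.symm h34]), hA'o i₂ i₄ (by simp [h12, h13, h14, h23, h24, h34, Ne.symm h12, Ne.symm h13, Ne.symm h14, Ne.symm h23, Ne.symm h24, Ne.symm h34]) (by simp [h12, h13, h14, h23, h24, h34, Ne.symm h12, Ne.symm h13, Ne.symm h14, Ne.symm h23, Ne.symm h24, Ne.symm h34]),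
    hA'o i₃ i₁ (by simp [h12, h13, h14, h23, h24, h34, Ne.symm h12, Ne.symm h13, Ne.symm h14, Ne.symm h23, Ne.symm h24, Ne.symm h34]) (by simp [h12, h13, h14, h23, h24, h34, Ne.symm h12, Ne.symm h13, Ne.symm h14, Ne.symm h23, Ne.symm h24, Ne.symm h34]), hA'o i₃ i₂ (by simp [h12, h13, h14, h23, h24, h34, Ne.symm h12, Ne.symm h13, Ne.symm h14, Ne.symm h23, Ne.symm h24, Ne.symm h34]) (by simp [h12, h13, h14, h23, h24, h34, Ne.symm h12, Ne.symm h13, Ne.symm h14, Ne.symm h23, Ne.symm h24, Ne.symm h34]), hA'o i₃ i₃ (by simp [h12, h13, h14, h23, h24, h34, Ne.symm h12, Ne.symm h13, Ne.symm h14, Ne.symm h23, Ne.symm h24, Ne.symm h34]) (by simp [h12, h13, h14, h23, h24, h34, Ne.symm h12, Ne.symm h13, Ne.symm h14, Ne.symm h23, Ne.symm h24, Ne.symm h34]),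
    hA'o i₃ i₄ (by simp [h12, h13, h14, h23, h24, h34, Ne.symm h12, Ne.symm h13, Ne.symm h14, Ne.symm h23, Ne.symm h24, Ne.symm h34]) (by simp [h12, h13, h14, h23, h24, h34, Ne.symm h12, Ne.symm h13, Ne.symm h14, Ne.symm h23, Ne.symm h24, Ne.symm h34]), hA'o i₄ i₁ (by simp [h12, h13, h14, h23, h24, h34, Ne.symm h12, Ne.symm h13, Ne.symm h14, Ne.symm h23, Ne.symm h24, Ne.symm h34]) (by simp [h12, h13, h14, h23, h24, h34, Ne.symm h12, Ne.symm h13, Ne.symm h14, Ne.symm h23, Ne.symm h24, Ne.symm h34]), hA'o i₄ i₂ (by simp [h12, h13, h14, h23, h24, h34, Ne.symm h12, Ne.symm h13, Ne.symm h14, Ne.symm h23, Ne.symm h24, Ne.symm h34]) (by simp [h12, h13, h14, h23, h24, h34, Ne.symm h12, Ne.symm h13, Ne.symm h14, Ne.symm h23, Ne.symm h24, Ne.symm h34]),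
    hA'o i₄ i₃ (by simp [h12, h13, h14, h23, h24, h34, Ne.symm h12, Ne.symm h13, Ne.symm h14, Ne.symm h23, Ne.symm h24, Ne.symm h34]) (by simp [h12, h13, h14, h23, h24, h34, Ne.symm h12, Ne.symm h13, Ne.symm h14, Ne.symm h23, Ne.symm h24, Ne.symm h34]), hA'o i₄ i₄ (by simp [h12, h13, h14, h23, h24, h34, Ne.symm h12, Ne.symm h13, Ne.symm h14, Ne.symm h23, Ne.symm h24, Ne.symm h34]) (by simp [h12, h13, h14, h23, h24, h34, Ne.symm h12, Ne.symm h13, Ne.symm h14, Ne.symm h23, Ne.symm h24, Ne.symm h34])] at h4m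
  have h1eq : (x - 1) * (x * ((A i₁ i₂)*(A i₂ i₄)*(A i₃ i₃)*(A i₄ i₁) - (A i₁ i₂)*(A i₂ i₄)*(A i₃ i₁)*(A i₄ i₃) - (A i₁ i₂)*(A i₂ i₃)*(A i₃ i₄)*(A i₄ i₁) + (A i₁ i₂)*(A i₂ i₃)*(A i₃ i₁)*(A i₄ i₄)) - ((A i₁ i₄)*(A i₂ i₁)*(A i₃ i₃)*(A i₄ i₂) - (A i₁ i₄)*(A i₂ i₁)*(A i₃ i₂)*(A i₄ i₃) - (A i₁ i₃)*(A i₂ i₁)*(A i₃ i₄)*(A i₄ i₂) + (A i₁ i₃)*(A i₂ i₁)*(A i₃ i₂)*(A i₄ i₄))) = 0 := by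
    linear_combination x * h4m - (((A i₁ i₄)*(A i₂ i₁)*(A i₃ i₃)*(A i₄ i₂) - (A i₁ i₄)*(A i₂ i₁)*(A i₃ i₂)*(A i₄ i₃) - (A i₁ i₃)*(A i₂ i₁)*(A i₃ i₄)*(A i₄ i₂) + (A i₁ i₃)*(A i₂ i₁)*(A i₃ i₂)*(A i₄ i₄)) + x * ((A i₁ i₂)*(A i₂ i₁)*(A i₃ i₄)*(A i₄ i₃) - (A i₁ i₂)*(A i₂ i₁)*(A i₃ i₃)*(A i₄ i₄))) * hxy
  have hkey : ((x - 1) * ((u - 1) * (x * (A i₁ i₂ * (A i₃ i₄ * g i₄))))) *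
      (A i₁ i₄ * A i₂ i₃ - A i₁ i₃ * A i₂ i₄) = 0 := by
    linear_combination (g i₁) * h1eq - ((A i₁ i₄)*(A i₃ i₃)*(A i₄ i₂) - (A i₁ i₄)*(A i₃ i₂)*(A i₄ i₃) - (A i₁ i₃)*(A i₃ i₄)*(A i₄ i₂) + (A i₁ i₃)*(A i₃ i₂)*(A i₄ i₄) - x*(A i₁ i₄)*(A i₃ i₃)*(A i₄ i₂) + x*(A i₁ i₄)*(A i₃ i₂)*(A i₄ i₃) + x*(A i₁ i₃)*(A i₃ i₄)*(A i₄ i₂) - x*(A i₁ i₃)*(A i₃ i₂)*(A i₄ i₄)) * hR2 - (x*(A i₁ i₂)*(A i₂ i₄)*(A i₄ i₃) - x*(A i₁ i₂)*(A i₂ i₃)*(A i₄ i₄) - x*x*(A i₁ i₂)*(A i₂ i₄)*(A i₄ i₃) + x*x*(A i₁ i₂)*(A i₂ i₃)*(A i₄ i₄)) * hG13 -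
      (-x*(A i₁ i₂)*(A i₂ i₄)*(A i₃ i₃) + x*(A i₁ i₂)*(A i₂ i₃)*(A i₃ i₄) + x*x*(A i₁ i₂)*(A i₂ i₄)*(A i₃ i₃) - x*x*(A i₁ i₂)*(A i₂ i₃)*(A i₃ i₄)) * hG14 - (-x*(A i₁ i₂)*(A i₁ i₄)*(A i₄ i₃) + x*(A i₁ i₂)*(A i₁ i₃)*(A i₄ i₄) + x*x*(A i₁ i₂)*(A i₁ i₄)*(A i₄ i₃) - x*x*(A i₁ i₂)*(A i₁ i₃)*(A i₄ i₄)) * hG23 - (x*(A i₁ i₂)*(A i₁ i₄)*(A i₃ i₃) - x*(A i₁ i₂)*(A i₁ i₃)*(A i₃ i₄) - x*x*(A i₁ i₂)*(A i₁ i₄)*(A i₃ i₃) + x*x*(A i₁ i₂)*(A i₁ i₃)*(A i₃ i₄)) * hG24 - (-x*(A i₁ i₂)*(A i₁ i₄)*(A i₂ i₃) + x*(A i₁ i₂)*(A i₁ i₃)*(A i₂ i₄) + x*x*(A i₁ i₂)*(A i₁ i₄)*(A i₂ i₃) - x*x*(A i₁ i₂)*(A i₁ i₃)*(A i₂ i₄))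 * hR3
  have hdet : A i₁ i₃ * A i₂ i₄ = A i₁ i₄ * A i₂ i₃ := by
    have hC : (x - 1) * ((u - 1) * (x * (A i₁ i₂ * (A i₃ i₄ * g i₄)))) ≠ 0 :=
      mul_ne_zero (sub_ne_zero.mpr hxne1) (mul_ne_zero (sub_ne_zero.mpr hune1)
        (mul_ne_zero hxne0 (mul_ne_zero (hoff _ _ h12)
          (mul_ne_zero (hoff _ _ h34) (hgne i₄)))))
    rcases mul_eq_zero.mp hkey with h | h
    · exact absurd h hC
    · linear_combination -h
  -- the 2x2 cross submatrix has rank one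
  have hrank2 : (subm A {i₁, i₂} {i₃, i₄}).rank = 1 := by
    have ha13 := hoff i₁ i₃ h13
    have hle : (subm A {i₁, i₂} {i₃, i₄}).rank ≤ 1 := by
      have hfac : subm A {i₁, i₂} {i₃, i₄} =
          (Matrix.of fun (p : {z // z ∈ ({i₁, i₂} : Finset (Fin n))}) (_ : Fin 1) => A p.1 i₃) *
          (Matrix.of fun (_ : Fin 1) (q : {z // z ∈ ({i₃, i₄} : Finset (Fin n))}) =>
            A i₁ q.1 / A i₁ i₃) := by
        ext p q
        obtain ⟨pv, hp⟩ := p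
        obtain ⟨qv, hq⟩ := q
        simp only [Finset.mem_insert, Finset.mem_singleton] at hp hq
        simp only [subm, Matrix.of_apply, Matrix.mul_apply, Fin.sum_univ_one]
        rcases hp with rfl | rfl <;> rcases hq with rfl | rfl
        · field_simp
        · field_simp
        · field_simp
        · field_simp
          first
          | linear_combination hdet
          | linear_combination -hdet
      rw [hfac]
      refine le_trans (Matrix.rank_mul_le_left _ _) (le_trans (Matrix.rank_le_card_width _) ?_)
      simp
    have hne0 : (subm A {i₁, i₂} {i₃, i₄}).rank ≠ 0 :=
      rank_ne_zero_of_entry _ ⟨i₁, by simp⟩ ⟨i₃, by simp⟩ ha13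
    omega
  obtain ⟨X, hXi₁, hXi₂, hXi₃, hXi₄, hXrank⟩ :=
    hPropR i₁ i₂ i₃ i₄ h12 h13 h14 h23 h24 h34 hrank2
  refine ⟨X, hXi₁, hXi₂, hXi₃, hXi₄, Finset.subset_univ X, ?_, ?_, ?_, ?_⟩
  · -- 2 ≤ X.card
    have hsub : ({i₁, i₂} : Finset (Fin n)) ⊆ X := by
      intro z hz
      rcases Finset.mem_insert.mp hz with rfl | hz
      · exact hXi₁
      · rw [Finset.mem_singleton.mp hz]; exact hXi₂
    have hc : ({i₁, i₂} : Finset (Fin n)).card = 2 := by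
      rw [Finset.card_insert_of_notMem (by simp [h12]), Finset.card_singleton]
    calc 2 = ({i₁, i₂} : Finset (Fin n)).card := hc.symm
    _ ≤ X.card := Finset.card_le_card hsub
  · -- X.card + 2 ≤ univ.card
    have hsub : ({i₃, i₄} : Finset (Fin n)) ⊆ Finset.univ \ X := by
      intro z hz
      rcases Finset.mem_insert.mp hz with rfl | hz
      · exact Finset.mem_sdiff.mpr ⟨Finset.mem_univ _, hXi₃⟩
      · rw [Finset.mem_singleton.mp hz]
        exact Finset.mem_sdiff.mpr ⟨Finset.mem_univ _, hXi₄⟩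
    have hc : ({i₃, i₄} : Finset (Fin n)).card = 2 := by
      rw [Finset.card_insert_of_notMem (by simp [h34]), Finset.card_singleton]
    have h1 : 2 ≤ (Finset.univ \ X).card := hc ▸ Finset.card_le_card hsub
    have h2 : (Finset.univ \ X).card = Finset.univ.card - X.card :=
      Finset.card_sdiff_of_subset (Finset.subset_univ X)
    have h3 : X.card ≤ Finset.univ.card := Finset.card_le_univ X
    omega
  · -- rank (subm A X (univ \ X)) ≤ 1
    rw [show (Finset.univ \ X) = Xᶜ from (Finset.compl_eq_univ_sdiff X).symm]
    exact le_of_eq hXrank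
  · -- rank (subm A (univ \ X) X) ≤ 1
    rw [show (Finset.univ \ X) = Xᶜ from (Finset.compl_eq_univ_sdiff X).symm]
    have hfac2 : subm A Xᶜ X =
        (Matrix.diagonal fun q : {z // z ∈ Xᶜ} => g q.1) *
          ((subm A X Xᶜ)ᵀ * Matrix.diagonal fun p : {z // z ∈ X} => (g p.1)⁻¹) := by
      ext q p
      obtain ⟨qv, hqv⟩ := q
      obtain ⟨pv, hpv⟩ := p
      have hqX : qv ∉ X := Finset.mem_compl.mp hqv
      have hsym := gsym pv qv
        (by rintro ⟨-, h⟩; exact hqX (h ▸ hXi₂))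
        (by rintro ⟨-, h⟩; exact hqX (h ▸ hXi₁))
        (by rintro ⟨-, h⟩; exact hXi₄ (h ▸ hpv))
        (by rintro ⟨-, h⟩; exact hXi₃ (h ▸ hpv))
      simp only [subm, Matrix.of_apply, Matrix.diagonal_mul, Matrix.mul_diagonal,
        Matrix.transpose_apply]
      field_simp [hgne]
      first
      | linear_combination hsym
      | linear_combination -hsym
    rw [hfac2]
    exact le_trans (Matrix.rank_mul_le_right _ _)
      (le_trans (Matrix.rank_mul_le_left _ _)
        (le_of_eq ((Matrix.rank_transpose _).trans hXrank)))


end PMAP
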